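/- With μ a measure on ℂ^n whose monomials are orthogonal in L²(μ), c_α = (∫|z^α|²dμ)^{-1} (c_γ = 0 if γ has a negative entry), and S z^α d\bar{z}_k := \bar{z}_k z^α − (c_{α−e_k}/c_α) z^{α−e_k}, the L²(μ) inner product ⟨S z^α d\bar{z}_k, S z^β d\bar{z}_ℓ⟩ vanishes unless β = α + e_ℓ − e_k, in which case it equals (1/c_α)·(c_α/c_{α+e_ℓ} − c_{α−e_k}/c_{α+e_ℓ−e_k}). -/

import Mathlib

open MeasureTheory

/-- The monomial `z ^ α` on `ℂ^n`. -/
noncomputable def mono (n : ℕ) (α : Fin n → ℕ) (z : Fin n → ℂ) : ℂ := ∏ i, z i ^ α i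

/-- The `p`-th standard unit multiindex. -/
def uvec (n : ℕ) (p : Fin n) : Fin n → ℕ := fun i => if i = p then 1 else 0

/-- The canonical solution `S z^α d z̄_k = z̄_k z^α - (c_{α-e_k}/c_α) z^{α-e_k}`,
with the convention that `c_{α-e_k} = 0` when `α_k = 0`. -/
noncomputable def Sop (n : ℕ) (c : (Fin n → ℕ) → ℝ) (α : Fin n → ℕ) (k : Fin n)
    (z : Fin n → ℂ) : ℂ :=
  (starRingEnd ℂ) (z k) * mono n α z
    - ((if α k = 0 then (0 : ℝ) else c (α - uvec n k) / c α : ℝ) : ℂ)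
        * mono n (α - uvec n k) z

theorem keyid (x y d P : ℂ) (hx : x ≠ 0) (hd : d ≠ 0) :
    P⁻¹ - d/y * x⁻¹ - d/x * y⁻¹ + d/x * (d/y) * d⁻¹ = 1/x * (x/P - d/y) := by
  simp only [div_eq_mul_inv, one_div]
  rw [show d * x⁻¹ * (d * y⁻¹) * d⁻¹ = d * d⁻¹ * (d * x⁻¹ * y⁻¹) by ring, mul_inv_cancel₀ hd,
    show (1:ℂ) * x⁻¹ * (x * P⁻¹ - d * y⁻¹) = x⁻¹ * x * P⁻¹ - x⁻¹ * (d * y⁻¹) by ring,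
    inv_mul_cancel₀ hx]
  ring

lemma mono_add_uvec (n : ℕ) (α : Fin n → ℕ) (k : Fin n) (z : Fin n → ℂ) :
    mono n (α + uvec n k) z = z k * mono n α z := by
  simp only [mono, uvec, Pi.add_apply, pow_add, Finset.prod_mul_distrib, pow_ite, pow_one, pow_zero,
    Finset.prod_ite_eq', Finset.mem_univ, if_true]
  ring

section aux

variable {X : Type*} [MeasurableSpace X]

lemma memLp_conj {f : X → ℂ} {μ : Measure X} (hf : MemLp f 2 μ) :
    MemLp (fun z => (starRingEnd ℂ) (f z)) 2 μ :=
  ⟨RCLike.continuous_conj.comp_aestronglyMeasurable hf.1, by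
    simpa using (eLpNorm_conj f 2 μ) ▸ hf.2⟩

lemma integrable_mul_conj {μ : Measure X} {f g : X → ℂ} (hf : MemLp f 2 μ) (hg : MemLp g 2 μ) :
    Integrable (fun z => f z * (starRingEnd ℂ) (g z)) μ := by
  have h := (memLp_conj hg).smul hf (p := 2) (q := 2) (r := 1)
  rw [memLp_one_iff_integrable] at h
  exact h

lemma int_diag {μ : Measure X} (f : X → ℂ) :
    ∫ z, f z * (starRingEnd ℂ) (f z) ∂μ = ((∫ z, ‖f z‖^2 ∂μ : ℝ) : ℂ) := by
  simp_rw [Complex.mul_conj', ← Complex.ofReal_pow]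
  exact integral_ofReal

end aux

section mi

variable {n : ℕ} {k l : Fin n} {α β : Fin n → ℕ}

lemma mi5 (h : β + uvec n k = α + uvec n l) : α + uvec n l - uvec n k = β := by
  funext i
  have h1 := congrFun h i
  simp only [Pi.add_apply, Pi.sub_apply, uvec] at h1 ⊢
  omega

lemma mi1 (h : β + uvec n k = α + uvec n l) (hαk : α k ≠ 0) : β l ≠ 0 := by
  have h1 := congrFun h k
  have h2 := congrFun h l
  simp only [Pi.add_apply, uvec] at h1 h2
  rcases eq_or_ne k l with rfl | hkl
  · simp at h1; omega
  · simp [hkl, Ne.symm hkl] at h1 h2; omega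

lemma mi2 (hβl : β l ≠ 0) (hEq : (β - uvec n l) + uvec n k = α) : β + uvec n k = α + uvec n l := by
  funext i
  have h1 := congrFun hEq i
  simp only [Pi.add_apply, Pi.sub_apply, uvec] at h1 ⊢
  rcases eq_or_ne i l with rfl | hil
  · simp at h1 ⊢; omega
  · simp [hil] at h1 ⊢; omega

lemma mi2' (h : β + uvec n k = α + uvec n l) (hβl : β l ≠ 0) :
    (β - uvec n l) + uvec n k = α := by
  funext i
  have h1 := congrFun h i
  simp only [Pi.add_apply, Pi.sub_apply, uvec] at h1 ⊢
  rcases eq_or_ne i l with rfl | hil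
  · simp at h1 ⊢; omega
  · simp [hil] at h1 ⊢; omega

lemma mi3 (hαk : α k ≠ 0) (hEq : (α - uvec n k) + uvec n l = β) : β + uvec n k = α + uvec n l := by
  funext i
  have h1 := congrFun hEq i
  simp only [Pi.add_apply, Pi.sub_apply, uvec] at h1 ⊢
  rcases eq_or_ne i k with rfl | hik
  · simp at h1 ⊢; omega
  · simp [hik] at h1 ⊢; omega

lemma mi3' (h : β + uvec n k = α + uvec n l) (hαk : α k ≠ 0) :
    (α - uvec n k) + uvec n l = β := by
  funext i
  have h1 := congrFun h i
  simp only [Pi.add_apply, Pi.sub_apply, uvec] at h1 ⊢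
  rcases eq_or_ne i k with rfl | hik
  · simp at h1 ⊢; omega
  · simp [hik] at h1 ⊢; omega

lemma mi4 (hαk : α k ≠ 0) (hβl : β l ≠ 0) (hEq : α - uvec n k = β - uvec n l) :
    β + uvec n k = α + uvec n l := by
  funext i
  have h1 := congrFun hEq i
  simp only [Pi.add_apply, Pi.sub_apply, uvec] at h1 ⊢
  rcases eq_or_ne i k with rfl | hik <;> rcases eq_or_ne i l with h' | hil
  · subst h'; simp at h1 ⊢; omega
  · simp [hil] at h1 ⊢; omega
  · subst h'; simp [hik] at h1 ⊢; omega
  · simp [hik, hil] at h1 ⊢; omega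

lemma mi4' (h : β + uvec n k = α + uvec n l) (hαk : α k ≠ 0) (hβl : β l ≠ 0) :
    β - uvec n l = α - uvec n k := by
  funext i
  have h1 := congrFun h i
  simp only [Pi.add_apply, Pi.sub_apply, uvec] at h1 ⊢
  rcases eq_or_ne i k with rfl | hik <;> rcases eq_or_ne i l with h' | hil
  · subst h'; simp at h1 ⊢; omega
  · simp [hil] at h1 ⊢; omega
  · subst h'; simp [hik] at h1 ⊢; omega
  · simp [hik, hil] at h1 ⊢; omega

lemma mi6 (h : β + uvec n k = α + uvec n l) (hαk : α k = 0) : k = l ∧ β = α := by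
  have h1 := congrFun h k
  simp only [Pi.add_apply, uvec, if_pos rfl] at h1
  have hkl : k = l := by by_contra hkl; simp [hkl] at h1; omega
  subst hkl
  refine ⟨rfl, funext fun i => ?_⟩
  have h2 := congrFun h i
  simp only [Pi.add_apply, uvec] at h2
  omega

end mi

theorem stmt9 (n : ℕ) (μ : Measure (Fin n → ℂ)) [IsFiniteMeasure μ]
    (hL2 : ∀ α : Fin n → ℕ, MemLp (mono n α) 2 μ)
    (hL2' : ∀ (k : Fin n) (α : Fin n → ℕ),
      MemLp (fun z => (starRingEnd ℂ) (z k) * mono n α z) 2 μ)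
    (horth : ∀ α β : Fin n → ℕ, α ≠ β →
      ∫ z, mono n α z * (starRingEnd ℂ) (mono n β z) ∂μ = 0)
    (hpos : ∀ α : Fin n → ℕ, 0 < ∫ z, ‖mono n α z‖ ^ 2 ∂μ)
    (c : (Fin n → ℕ) → ℝ) (hc : ∀ α, c α = (∫ z, ‖mono n α z‖ ^ 2 ∂μ)⁻¹)
    (k l : Fin n) (α β : Fin n → ℕ) :
    (β + uvec n k ≠ α + uvec n l →
      ∫ z, Sop n c α k z * (starRingEnd ℂ) (Sop n c β l z) ∂μ = 0) ∧
    (β + uvec n k = α + uvec n l →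
      ∫ z, Sop n c α k z * (starRingEnd ℂ) (Sop n c β l z) ∂μ =
        ((1 / c α) * (c α / c (α + uvec n l)
          - (if α k = 0 then (0 : ℝ)
             else c (α - uvec n k) / c (α + uvec n l - uvec n k))) : ℝ)) := by
  have hc0 : ∀ γ, c γ ≠ 0 := fun γ => by rw [hc]; exact ne_of_gt (inv_pos.mpr (hpos γ))
  have hdiag : ∀ γ, ∫ z, mono n γ z * (starRingEnd ℂ) (mono n γ z) ∂μ = (((c γ)⁻¹ : ℝ) : ℂ) :=
    fun γ => by rw [int_diag, hc, inv_inv]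
  set a : ℝ := if α k = 0 then (0 : ℝ) else c (α - uvec n k) / c α with ha
  set b : ℝ := if β l = 0 then (0 : ℝ) else c (β - uvec n l) / c β with hb
  have key : ∀ z, Sop n c α k z * (starRingEnd ℂ) (Sop n c β l z)
      = mono n (α + uvec n l) z * (starRingEnd ℂ) (mono n (β + uvec n k) z)
        - (b : ℂ) * (mono n α z * (starRingEnd ℂ) (mono n ((β - uvec n l) + uvec n k) z))
        - (a : ℂ) * (mono n ((α - uvec n k) + uvec n l) z * (starRingEnd ℂ) (mono n β z))
        + (a : ℂ) * (b : ℂ)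
            * (mono n (α - uvec n k) z * (starRingEnd ℂ) (mono n (β - uvec n l) z)) := by
    intro z
    simp only [Sop, ← ha, ← hb, map_sub, map_mul, Complex.conj_conj, Complex.conj_ofReal,
      mono_add_uvec]
    ring
  have hint1 := integrable_mul_conj (hL2 (α + uvec n l)) (hL2 (β + uvec n k)) (μ := μ)
  have hint2 := integrable_mul_conj (hL2 α) (hL2 ((β - uvec n l) + uvec n k)) (μ := μ)
  have hint3 := integrable_mul_conj (hL2 ((α - uvec n k) + uvec n l)) (hL2 β) (μ := μ)
  have hint4 := integrable_mul_conj (hL2 (α - uvec n k)) (hL2 (β - uvec n l)) (μ := μ)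
  have hexp : ∫ z, Sop n c α k z * (starRingEnd ℂ) (Sop n c β l z) ∂μ
      = (∫ z, mono n (α + uvec n l) z * (starRingEnd ℂ) (mono n (β + uvec n k) z) ∂μ)
        - (b : ℂ) * (∫ z, mono n α z * (starRingEnd ℂ) (mono n ((β - uvec n l) + uvec n k) z) ∂μ)
        - (a : ℂ) * (∫ z, mono n ((α - uvec n k) + uvec n l) z * (starRingEnd ℂ) (mono n β z) ∂μ)
        + (a : ℂ) * (b : ℂ)
            * (∫ z, mono n (α - uvec n k) z * (starRingEnd ℂ) (mono n (β - uvec n l) z) ∂μ) := by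
    have i2 : Integrable
        (fun z => (b : ℂ) * (mono n α z * (starRingEnd ℂ) (mono n ((β - uvec n l) + uvec n k) z)))
        μ := hint2.const_mul _
    have i3 : Integrable (fun z => (a : ℂ)
        * (mono n ((α - uvec n k) + uvec n l) z * (starRingEnd ℂ) (mono n β z))) μ :=
      hint3.const_mul _
    have i4 : Integrable (fun z => (a : ℂ) * (b : ℂ)
        * (mono n (α - uvec n k) z * (starRingEnd ℂ) (mono n (β - uvec n l) z))) μ :=
      hint4.const_mul _
    have i12 : Integrable (fun z =>
        mono n (α + uvec n l) z * (starRingEnd ℂ) (mono n (β + uvec n k) z)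
        - (b : ℂ) * (mono n α z * (starRingEnd ℂ) (mono n ((β - uvec n l) + uvec n k) z))) μ :=
      hint1.sub i2
    have i123 : Integrable (fun z =>
        mono n (α + uvec n l) z * (starRingEnd ℂ) (mono n (β + uvec n k) z)
        - (b : ℂ) * (mono n α z * (starRingEnd ℂ) (mono n ((β - uvec n l) + uvec n k) z))
        - (a : ℂ) * (mono n ((α - uvec n k) + uvec n l) z * (starRingEnd ℂ) (mono n β z))) μ :=
      i12.sub i3
    simp_rw [key]
    rw [integral_add i123 i4, integral_sub i12 i3, integral_sub hint1 i2,
      integral_const_mul, integral_const_mul, integral_const_mul]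
  constructor
  · intro hne
    have h1 : ∫ z, mono n (α + uvec n l) z * (starRingEnd ℂ) (mono n (β + uvec n k) z) ∂μ = 0 :=
      horth _ _ (fun h => hne h.symm)
    have h2 : (b : ℂ)
        * (∫ z, mono n α z * (starRingEnd ℂ) (mono n ((β - uvec n l) + uvec n k) z) ∂μ) = 0 := by
      by_cases hβl : β l = 0
      · rw [hb, if_pos hβl]; simp
      · rw [horth _ _ (fun h => hne (mi2 hβl h.symm)), mul_zero]
    have h3 : (a : ℂ)
        * (∫ z, mono n ((α - uvec n k) + uvec n l) z * (starRingEnd ℂ) (mono n β z) ∂μ) = 0 := by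
      by_cases hαk : α k = 0
      · rw [ha, if_pos hαk]; simp
      · rw [horth _ _ (fun h => hne (mi3 hαk h)), mul_zero]
    have h4 : (a : ℂ) * (b : ℂ)
        * (∫ z, mono n (α - uvec n k) z * (starRingEnd ℂ) (mono n (β - uvec n l) z) ∂μ) = 0 := by
      by_cases hαk : α k = 0
      · rw [ha, if_pos hαk]; simp
      · by_cases hβl : β l = 0
        · rw [hb, if_pos hβl]; simp
        · rw [horth _ _ (fun h => hne (mi4 hαk hβl h)), mul_zero]
    rw [hexp, h1, h2, h3, h4]
    ring
  · intro h
    by_cases hαk : α k = 0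
    · obtain ⟨hkl, hβα⟩ := mi6 h hαk
      subst hkl; subst hβα
      have ha0 : a = 0 := by rw [ha, if_pos hαk]
      have hb0 : b = 0 := by rw [hb, if_pos hαk]
      rw [hexp, ha0, hb0, if_pos hαk, hdiag (β + uvec n k)]
      push_cast
      simp only [zero_mul, mul_zero, sub_zero, add_zero]
      have h1 : ((c β : ℂ)) ≠ 0 := Complex.ofReal_ne_zero.mpr (hc0 β)
      have h2 : ((c (β + uvec n k) : ℂ)) ≠ 0 := Complex.ofReal_ne_zero.mpr (hc0 _)
      field_simp
    · have hβl : β l ≠ 0 := mi1 h hαk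
      have e2 : (β - uvec n l) + uvec n k = α := mi2' h hβl
      have e3 : (α - uvec n k) + uvec n l = β := mi3' h hαk
      have e4 : β - uvec n l = α - uvec n k := mi4' h hαk hβl
      have e5 : α + uvec n l - uvec n k = β := mi5 h
      have ha' : a = c (α - uvec n k) / c α := by rw [ha, if_neg hαk]
      have hb' : b = c (α - uvec n k) / c β := by rw [hb, if_neg hβl, e4]
      rw [hexp, h, e2, e3, e4, hdiag (α + uvec n l), hdiag α, hdiag β, hdiag (α - uvec n k),
        if_neg hαk, e5, ha', hb']
      push_cast
      exact keyid _ _ _ _ (Complex.ofReal_ne_zero.mpr (hc0 α))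
        (Complex.ofReal_ne_zero.mpr (hc0 (α - uvec n k)))
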